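/- Let f, g : ℝ^N → ℝ be quasiconvex functions such that f = g almost everywhere with respect to Lebesgue measure, and suppose that their common essential infimum over ℝ^N is a (finite) real number m. Then the functions max{f, m} and max{g, m} have the same points of continuity and the same points of approximate continuity, and at any such common point they take a common value. -/

import Mathlib

open MeasureTheory Metric Filter

/-- `f` is approximately continuous at `x` if for every `ε > 0` the set
`{y | |f y - f x| < ε}` has Lebesgue density `1` at `x`. -/
def ApproxContinuousAt {N : ℕ} (f : EuclideanSpace ℝ (Fin N) → ℝ)
    (x : EuclideanSpace ℝ (Fin N)) : Prop :=
  ∀ ε : ℝ, 0 < ε →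
    Tendsto (fun r : ℝ => volume ({y | |f y - f x| < ε} ∩ ball x r) / volume (ball x r))
      (nhdsWithin 0 (Set.Ioi 0)) (nhds 1)

open scoped ENNReal NNReal

namespace Stmt10Aux

variable {N : ℕ}

local notation "E" => EuclideanSpace ℝ (Fin N)

lemma int_nonempty {T : Set E} (hT : Convex ℝ T) (h : volume T ≠ 0) :
    (interior T).Nonempty := by
  by_contra h'
  rw [Set.not_nonempty_iff_eq_empty] at h'
  have hsp : affineSpan ℝ T ≠ ⊤ := by
    intro htop
    have := hT.interior_nonempty_iff_affineSpan_eq_top.2 htop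
    rw [h'] at this
    exact this.ne_empty rfl
  exact h (measure_mono_null (subset_affineSpan ℝ T)
    (Measure.addHaar_affineSubspace volume _ hsp))

lemma exists_small_t {φ : ℝ → E} (hφ : Continuous φ) {U : Set E} (hU : IsOpen U)
    (h0 : φ 0 ∈ U) : ∃ t, t ∈ Set.Ioo (0:ℝ) 1 ∧ φ t ∈ U := by
  have h1 : φ ⁻¹' U ∈ nhds (0:ℝ) := hφ.continuousAt.preimage_mem_nhds (hU.mem_nhds h0)
  have h2 : (φ ⁻¹' U) ∩ Set.Ioo 0 1 ∈ nhdsWithin (0:ℝ) (Set.Ioi 0) :=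
    inter_mem (nhdsWithin_le_nhds h1) (Ioo_mem_nhdsGT_of_mem ⟨le_rfl, one_pos⟩)
  obtain ⟨t, ht⟩ := Filter.nonempty_of_mem h2
  exact ⟨t, ht.2, ht.1⟩

lemma open_subset {T U : Set E} (hT : Convex ℝ T) (hU : IsOpen U)
    (h0 : volume (U \ T) = 0) : U ⊆ T := by
  rcases U.eq_empty_or_nonempty with rfl | hne
  · simp
  have hμU : volume U ≠ 0 := (hU.measure_pos volume hne).ne'
  have hμT : volume T ≠ 0 := by
    intro hT0
    apply hμU
    have hsub : U ⊆ (U \ T) ∪ T := fun y hy => by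
      by_cases h : y ∈ T
      exacts [Or.inr h, Or.inl ⟨hy, h⟩]
    refine le_antisymm (le_trans (measure_mono hsub) ?_) zero_le
    calc volume ((U \ T) ∪ T) ≤ volume (U \ T) + volume T := measure_union_le _ _
    _ = 0 := by rw [h0, hT0, add_zero]
  obtain ⟨q, hq⟩ := int_nonempty hT hμT
  have hcl : U ⊆ closure T := by
    intro p hp
    rw [_root_.mem_closure_iff]
    intro o ho hpo
    by_contra hc
    rw [Set.not_nonempty_iff_eq_empty] at hc
    have hsub : o ∩ U ⊆ U \ T := fun y hy =>
      ⟨hy.2, fun hT' => (Set.eq_empty_iff_forall_notMem.1 hc y ⟨hy.1, hT'⟩)⟩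
    exact absurd (measure_mono_null hsub h0)
      ((ho.inter hU).measure_pos volume ⟨p, hpo, hp⟩).ne'
  intro p hp
  set φ : ℝ → E := fun t => p + t • (p - q) with hφdef
  have hφ : Continuous φ := by fun_prop
  have hφ0 : φ 0 ∈ U := by simpa [hφdef] using hp
  obtain ⟨t, ⟨ht0, ht1⟩, htU⟩ := exists_small_t hφ hU hφ0
  have h1t : (1:ℝ) + t ≠ 0 := by positivity
  have hcomb : ((1+t)⁻¹) • φ t + (t * (1+t)⁻¹) • q = p := by
    rw [hφdef]
    simp only
    match_scalars <;> field_simp <;> ring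
  have : p ∈ interior T := by
    rw [← hcomb]
    refine hT.combo_closure_interior_mem_interior (hcl htU) hq (by positivity) (by positivity) ?_
    field_simp
  exact interior_subset this

lemma open_inter_empty {T U : Set E} (hT : Convex ℝ T) (hμT : volume T ≠ 0)
    (hU : IsOpen U) (h0 : volume (U ∩ T) = 0) : U ∩ T = ∅ := by
  rw [Set.eq_empty_iff_forall_notMem]
  rintro p ⟨hpU, hpT⟩
  obtain ⟨q, hq⟩ := int_nonempty hT hμT
  set φ : ℝ → E := fun t => p + t • (q - p) with hφdef
  have hφ : Continuous φ := by fun_prop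
  have hφ0 : φ 0 ∈ U := by simpa [hφdef] using hpU
  obtain ⟨t, ⟨ht0, ht1⟩, htU⟩ := exists_small_t hφ hU hφ0
  have hseg : φ t ∈ interior T := by
    have : φ t = (1 - t) • p + t • q := by rw [hφdef]; simp only; module
    rw [this]
    exact hT.combo_self_interior_mem_interior hpT hq (by linarith) ht0 (by ring)
  have hpos := (isOpen_interior.inter hU).measure_pos volume ⟨φ t, hseg, htU⟩
  have hsub : interior T ∩ U ⊆ U ∩ T := fun y hy => ⟨hy.2, interior_subset hy.1⟩
  exact absurd (measure_mono_null hsub h0) hpos.ne'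

lemma reflect_bound {T : Set E} (hT : Convex ℝ T) {x : E} (hx : x ∉ T) (r : ℝ) :
    volume (T ∩ ball x r) + volume (T ∩ ball x r) ≤ volume (ball x r) := by
  set R : E → E := fun y => (x + x) - y with hRdef
  have hmeas : ∀ A : Set E, volume (R ⁻¹' A) = volume A := by
    intro A
    have : R = (fun y => (x + x) + y) ∘ (fun y : E => -y) := by
      funext y; simp [hRdef, sub_eq_add_neg]
    rw [this, Set.preimage_comp, Measure.measure_preimage_neg, measure_preimage_add]
  have hRT : Convex ℝ (R ⁻¹' T) := by
    intro y hy z hz a b ha hb hab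
    have hmem := hT hy hz ha hb hab
    have : R (a • y + b • z) = a • R y + b • R z := by
      rw [hRdef]
      simp only
      have hb' : b = 1 - a := by linarith
      subst hb'
      module
    simp only [Set.mem_preimage, this]
    exact hT hy hz ha hb hab
  have hRball : R ⁻¹' (ball x r) = ball x r := by
    ext y
    simp only [Set.mem_preimage, mem_ball, hRdef]
    rw [dist_eq_norm, dist_eq_norm]
    congr! 1
    rw [show x + x - y - x = -(y - x) by abel, norm_neg]
  have hpre : R ⁻¹' (T ∩ ball x r) = (R ⁻¹' T) ∩ ball x r := by
    rw [Set.preimage_inter, hRball]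
  have hNM : NullMeasurableSet ((R ⁻¹' T) ∩ ball x r) (volume : Measure E) :=
    (hRT.nullMeasurableSet volume).inter measurableSet_ball.nullMeasurableSet
  have hdisj : (T ∩ ball x r) ∩ ((R ⁻¹' T) ∩ ball x r) = ∅ := by
    rw [Set.eq_empty_iff_forall_notMem]
    rintro y ⟨⟨hyT, _⟩, ⟨hyT', _⟩⟩
    apply hx
    have hmem := hT hyT hyT' (by norm_num : (0:ℝ) ≤ 1/2) (by norm_num : (0:ℝ) ≤ 1/2)
      (by norm_num : (1:ℝ)/2 + 1/2 = 1)
    have : (1/2 : ℝ) • y + (1/2 : ℝ) • R y = x := by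
      rw [hRdef]; simp only; module
    rwa [this] at hmem
  have hsub : (T ∩ ball x r) ∪ ((R ⁻¹' T) ∩ ball x r) ⊆ ball x r := by
    rintro y (⟨_, h⟩ | ⟨_, h⟩) <;> exact h
  calc volume (T ∩ ball x r) + volume (T ∩ ball x r)
      = volume (T ∩ ball x r) + volume (R ⁻¹' (T ∩ ball x r)) := by rw [hmeas]
    _ = volume (T ∩ ball x r) + volume ((R ⁻¹' T) ∩ ball x r) := by rw [hpre]
    _ = volume ((T ∩ ball x r) ∪ ((R ⁻¹' T) ∩ ball x r)) := by
        have h2 := measure_union_add_inter₀ (μ := volume) (T ∩ ball x r) hNM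
        rw [hdisj, measure_empty, add_zero] at h2
        exact h2.symm
    _ ≤ volume (ball x r) := measure_mono hsub


lemma ball_facts {x : E} {r : ℝ} (hr : 0 < r) :
    volume (ball x r) ≠ 0 ∧ volume (ball x r) ≠ ⊤ :=
  ⟨(isOpen_ball.measure_pos volume (nonempty_ball.2 hr)).ne', measure_ball_lt_top.ne⟩

lemma mem_of_density_one {T : Set E} (hT : Convex ℝ T) {x : E}
    (h : Tendsto (fun r : ℝ => volume (T ∩ ball x r) / volume (ball x r))
      (nhdsWithin 0 (Set.Ioi 0)) (nhds 1)) : x ∈ T := by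
  by_contra hx
  have key : ∀ r : ℝ, 0 < r →
      volume (T ∩ ball x r) / volume (ball x r) ≤ 1/2 := by
    intro r hr
    obtain ⟨hb0, hbt⟩ := ball_facts (x := x) hr
    have h2 := reflect_bound hT hx r
    have h3 : volume (T ∩ ball x r) * 2 ≤ volume (ball x r) := by
      rw [mul_two]; exact h2
    rw [ENNReal.div_le_iff_le_mul (Or.inl hb0) (Or.inl hbt), one_div,
      ← ENNReal.div_eq_inv_mul,
      ENNReal.le_div_iff_mul_le (Or.inl two_ne_zero) (Or.inl ENNReal.ofNat_ne_top)]
    exact h3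
  have hhalf : (1:ℝ≥0∞)/2 < 1 := ENNReal.half_lt_self one_ne_zero ENNReal.one_ne_top
  have hev := h.eventually (lt_mem_nhds hhalf)
  have hev2 : ∀ᶠ r : ℝ in nhdsWithin 0 (Set.Ioi 0), r ∈ Set.Ioi (0:ℝ) :=
    self_mem_nhdsWithin
  obtain ⟨r, h1, h2⟩ := (hev.and hev2).exists
  exact absurd (key r h2) (not_le.2 h1)

lemma exists_density_lb {T : Set E} (hT : Convex ℝ T) (hμT : volume T ≠ 0) {x : E}
    (hx : x ∈ T) : ∃ c : ℝ≥0∞, c ≠ 0 ∧ ∀ᶠ r : ℝ in nhdsWithin 0 (Set.Ioi 0),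
      c ≤ volume (T ∩ ball x r) / volume (ball x r) := by
  rcases subsingleton_or_nontrivial E with hsub | hnt
  · refine ⟨1, one_ne_zero, ?_⟩
    filter_upwards [self_mem_nhdsWithin] with r hr
    have hTx : ball x r ⊆ T := fun y _ => (Subsingleton.elim y x) ▸ hx
    rw [Set.inter_eq_self_of_subset_right hTx]
    obtain ⟨hb0, hbt⟩ := ball_facts (x := x) hr
    rw [ENNReal.div_self hb0 hbt]
  · obtain ⟨q, hq⟩ := int_nonempty hT hμT
    obtain ⟨δ, hδ0, hδ⟩ := Metric.isOpen_iff.1 isOpen_interior q hq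
    have hδT : ball q δ ⊆ T := hδ.trans interior_subset
    set d : ℝ := dist x q + δ with hd
    have hd0 : 0 < d := by positivity
    set n := Module.finrank ℝ E with hn
    set B1 := volume (ball (0:E) 1) with hB1
    set Bq := volume (ball q δ) with hBq
    set D := ENNReal.ofReal (d ^ n) with hD
    have hB10 : B1 ≠ 0 := (isOpen_ball.measure_pos volume (nonempty_ball.2 one_pos)).ne'
    have hB1t : B1 ≠ ⊤ := measure_ball_lt_top.ne
    have hBq0 : Bq ≠ 0 := (isOpen_ball.measure_pos volume (nonempty_ball.2 hδ0)).ne'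
    have hD0 : D ≠ 0 := by
      rw [hD]; simp only [ne_eq, ENNReal.ofReal_eq_zero, not_le]; positivity
    have hDt : D ≠ ⊤ := ENNReal.ofReal_ne_top
    refine ⟨Bq / (D * B1), ENNReal.div_ne_zero.2 ⟨hBq0, ENNReal.mul_ne_top hDt hB1t⟩, ?_⟩
    have hmem : Set.Ioc (0:ℝ) d ∈ nhdsWithin (0:ℝ) (Set.Ioi 0) :=
      Ioc_mem_nhdsGT_of_mem ⟨le_rfl, hd0⟩
    filter_upwards [hmem] with r hr
    obtain ⟨hr0, hrd⟩ := hr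
    obtain ⟨hb0, hbt⟩ := ball_facts (x := x) hr0
    set t : ℝ := r / d with ht
    have ht0 : 0 < t := by positivity
    have ht1 : t ≤ 1 := by rw [ht, div_le_one hd0]; exact hrd
    -- image of ball q δ under homothety
    have himg : (AffineMap.homothety x t) '' (ball q δ) ⊆ T ∩ ball x r := by
      rintro z ⟨y, hy, rfl⟩
      constructor
      · have hyT : y ∈ T := hδT hy
        have : AffineMap.homothety x t y = t • y + (1 - t) • x := by
          rw [AffineMap.homothety_apply]
          simp only [vsub_eq_sub, vadd_eq_add]
          module
        rw [this]
        exact hT hyT hx ht0.le (by linarith) (by ring)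
      · rw [mem_ball, AffineMap.homothety_apply]
        simp only [vsub_eq_sub, vadd_eq_add, dist_eq_norm, add_sub_cancel_right, norm_smul,
          Real.norm_eq_abs, abs_of_pos ht0]
        have hyx : ‖y - x‖ < d := by
          calc ‖y - x‖ ≤ ‖y - q‖ + ‖q - x‖ := norm_sub_le_norm_sub_add_norm_sub _ _ _
          _ < δ + dist x q := by
              rw [← dist_eq_norm, ← dist_eq_norm]
              have := mem_ball.1 hy
              rw [dist_comm q x]
              linarith [dist_nonneg (x := q) (y := x)]
          _ = d := by rw [hd]; ring
        calc t * ‖y - x‖ < t * d := by exact (mul_lt_mul_iff_right₀ ht0).2 hyx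
        _ = r := by rw [ht]; field_simp
    have himeas : volume ((AffineMap.homothety x t) '' (ball q δ)) =
        ENNReal.ofReal (t ^ n) * Bq := by
      rw [Measure.addHaar_image_homothety, abs_of_pos (by positivity), hBq, hn]
    have hlow : ENNReal.ofReal (t ^ n) * Bq ≤ volume (T ∩ ball x r) := by
      rw [← himeas]; exact measure_mono himg
    have hballr : volume (ball x r) = ENNReal.ofReal (r ^ n) * B1 := by
      rw [Measure.addHaar_ball volume x hr0.le, hB1, hn]
    set R' := ENNReal.ofReal (r ^ n) with hR'
    have hR'0 : R' ≠ 0 := by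
      rw [hR']; simp only [ne_eq, ENNReal.ofReal_eq_zero, not_le]; positivity
    have hR't : R' ≠ ⊤ := ENNReal.ofReal_ne_top
    have htn : ENNReal.ofReal (t ^ n) = R' / D := by
      rw [ht, div_pow, hR', hD, ENNReal.ofReal_div_of_pos (by positivity)]
    have hmain : (Bq / (D * B1)) * volume (ball x r) ≤ volume (T ∩ ball x r) := by
      have heq : (Bq / (D * B1)) * volume (ball x r) = (R' / D) * Bq := by
        rw [hballr, div_eq_mul_inv, div_eq_mul_inv,
          ENNReal.mul_inv (Or.inl hD0) (Or.inl hDt)]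
        calc (Bq * (D⁻¹ * B1⁻¹)) * (R' * B1) = (R' * D⁻¹ * Bq) * (B1⁻¹ * B1) := by ring
        _ = R' * D⁻¹ * Bq := by rw [ENNReal.inv_mul_cancel hB10 hB1t, mul_one]
      rw [heq, ← htn]
      exact hlow
    calc Bq / (D * B1) = (Bq / (D * B1)) * volume (ball x r) / volume (ball x r) := by
          rw [mul_div_assoc, ENNReal.div_self hb0 hbt, mul_one]
    _ ≤ volume (T ∩ ball x r) / volume (ball x r) := ENNReal.div_le_div_right hmain _


lemma sublevel_pos {f : E → ℝ} {m : ℝ}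
    (hm : essInf (fun x => (f x : EReal)) volume = (m : EReal)) :
    ∀ α : ℝ, m < α → volume {x : E | f x < α} ≠ 0 := by
  intro α hα h0
  have hae : ∀ᵐ x ∂(volume : Measure E), (α : EReal) ≤ (f x : EReal) := by
    rw [ae_iff]
    convert h0 using 2
    ext x
    simp only [Set.mem_setOf_eq, not_le, EReal.coe_lt_coe_iff]
  have h2 := le_essInf_of_ae_le (μ := (volume : Measure E))
    (f := fun x => (f x : EReal)) (α : EReal) hae
  rw [hm, EReal.coe_le_coe_iff] at h2
  exact absurd h2 (not_le.2 hα)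

section Transfer

lemma diff_null {f g : E → ℝ} (hfg : f =ᵐ[volume] g) : volume {y : E | ¬ f y = g y} = 0 := hfg

lemma sub_null {f g : E → ℝ} (hfg : f =ᵐ[volume] g) {A : Set E}
    (hA : ∀ y ∈ A, f y ≠ g y) : volume A = 0 :=
  measure_mono_null (fun y hy => hA y hy) (diff_null hfg)

lemma Tpos {f g : E → ℝ} {m : ℝ} (hfg : f =ᵐ[volume] g)
    (hm : essInf (fun x => (f x : EReal)) volume = (m : EReal)) {α : ℝ} (hα : m < α) :
    volume {y : E | g y < α} ≠ 0 := by
  intro h0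
  apply sublevel_pos hm α hα
  have hsub : {y : E | f y < α} ⊆ {y : E | f y < α ∧ ¬ g y < α} ∪ {y : E | g y < α} := by
    intro y hy
    by_cases h : g y < α
    exacts [Or.inr h, Or.inl ⟨hy, h⟩]
  refine le_antisymm (le_trans (measure_mono hsub) ?_) zero_le
  calc volume ({y : E | f y < α ∧ ¬ g y < α} ∪ {y : E | g y < α})
      ≤ volume {y : E | f y < α ∧ ¬ g y < α} + volume {y : E | g y < α} :=
        measure_union_le _ _
  _ = 0 := by
      rw [h0, add_zero]
      exact sub_null hfg fun y hy => by
        simp only [Set.mem_setOf_eq] at hy; intro h; rw [h] at hy; exact hy.2 hy.1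

lemma cont_transfer {f g : E → ℝ} {m : ℝ} (hg : ∀ α : ℝ, Convex ℝ {x | g x < α})
    (hfg : f =ᵐ[volume] g)
    (hm : essInf (fun x => (f x : EReal)) volume = (m : EReal)) (x : E)
    (hc : ContinuousAt (fun y => max (f y) m) x) :
    ContinuousAt (fun y => max (g y) m) x ∧ max (g x) m = max (f x) m := by
  set a := max (f x) m with ha
  have ham : m ≤ a := le_max_right _ _
  -- upper eventual bound
  have upper : ∀ ε : ℝ, 0 < ε → ∀ᶠ y in nhds x, max (g y) m < a + ε := by
    intro ε hε
    have h1 : {y : E | max (f y) m < a + ε} ∈ nhds x :=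
      hc (Iio_mem_nhds (by linarith : a < a + ε))
    obtain ⟨U, hUsub, hUopen, hxU⟩ := _root_.mem_nhds_iff.1 h1
    have hnull : volume (U \ {y : E | g y < a + ε}) = 0 := by
      refine sub_null hfg fun y hy => ?_
      have h2 : f y < a + ε := lt_of_le_of_lt (le_max_left _ _) (hUsub hy.1)
      have h3 : ¬ g y < a + ε := hy.2
      intro h; rw [h] at h2; exact h3 h2
    have hUT := open_subset (hg (a + ε)) hUopen hnull
    filter_upwards [hUopen.mem_nhds hxU] with y hy
    exact max_lt (hUT hy) (by linarith)
  -- lower eventual bound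
  have lower : ∀ ε : ℝ, 0 < ε → ε < a - m → ∀ᶠ y in nhds x, a - ε ≤ max (g y) m := by
    intro ε hε hεa
    have h1 : {y : E | a - ε < max (f y) m} ∈ nhds x :=
      hc (Ioi_mem_nhds (by linarith : a - ε < a))
    obtain ⟨U, hUsub, hUopen, hxU⟩ := _root_.mem_nhds_iff.1 h1
    have hnull : volume (U ∩ {y : E | g y < a - ε}) = 0 := by
      refine sub_null hfg fun y hy => ?_
      have h2 : a - ε < f y := by
        have := hUsub hy.1
        simp only [Set.mem_setOf_eq] at this
        rcases max_cases (f y) m with ⟨h3, _⟩ | ⟨h3, _⟩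
        · rwa [h3] at this
        · rw [h3] at this; linarith
      have h3 : g y < a - ε := hy.2
      intro h; rw [h] at h2; linarith
    have hempty := open_inter_empty (hg (a - ε)) (Tpos hfg hm (by linarith)) hUopen hnull
    filter_upwards [hUopen.mem_nhds hxU] with y hy
    have : y ∉ {y : E | g y < a - ε} := fun hmem =>
      Set.eq_empty_iff_forall_notMem.1 hempty y ⟨hy, hmem⟩
    simp only [Set.mem_setOf_eq, not_lt] at this
    exact le_trans this (le_max_left _ _)
  -- value at x
  have hGle : max (g x) m ≤ a := by
    by_contra hlt
    push_neg at hlt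
    have h2 := mem_of_mem_nhds (upper (max (g x) m - a) (by linarith))
    simp only [Set.mem_setOf_eq] at h2
    linarith
  have hGge : a ≤ max (g x) m := by
    rcases eq_or_lt_of_le ham with heq | hma
    · rw [← heq]; exact le_max_right _ _
    · by_contra hlt
      push_neg at hlt
      set ε := min (a - m) (a - max (g x) m) / 2 with hε
      have hε0 : 0 < ε := by
        apply half_pos; apply lt_min <;> linarith
      have hεa : ε < a - m := by
        have h1 : min (a - m) (a - max (g x) m) ≤ a - m := min_le_left _ _
        rw [hε]; linarith
      have hεG : ε < a - max (g x) m := by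
        have h1 : min (a - m) (a - max (g x) m) ≤ a - max (g x) m := min_le_right _ _
        rw [hε]; linarith
      have h2 := mem_of_mem_nhds (lower ε hε0 hεa)
      simp only [Set.mem_setOf_eq] at h2
      linarith
  have hval : max (g x) m = a := le_antisymm hGle hGge
  refine ⟨?_, hval⟩
  have htend : Tendsto (fun y => max (g y) m) (nhds x) (nhds a) := by
    apply tendsto_order.2
    constructor
    · intro b hb
      rcases eq_or_lt_of_le ham with heq | hma
      · filter_upwards with y
        exact lt_of_lt_of_le hb (heq ▸ le_max_right (g y) m)
      · set ε := min ((a - b)/2) ((a - m)/2) with hε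
        have hε0 : 0 < ε := lt_min (by linarith) (by linarith)
        have h1 : ε ≤ (a - b)/2 := min_le_left _ _
        have h2 : ε ≤ (a - m)/2 := min_le_right _ _
        filter_upwards [lower ε hε0 (by linarith)] with y hy
        linarith
    · intro b hb
      filter_upwards [upper (b - a) (by linarith)] with y hy
      linarith
  show Tendsto (fun y => max (g y) m) (nhds x) (nhds (max (g x) m))
  rwa [hval]

lemma approx_transfer {f g : E → ℝ} {m : ℝ} (hg : ∀ α : ℝ, Convex ℝ {x | g x < α})
    (hfg : f =ᵐ[volume] g)
    (hm : essInf (fun x => (f x : EReal)) volume = (m : EReal)) (x : E)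
    (hA : ApproxContinuousAt (fun y => max (f y) m) x) :
    ApproxContinuousAt (fun y => max (g y) m) x ∧ max (g x) m = max (f x) m := by
  set a := max (f x) m with ha
  have ham : m ≤ a := le_max_right _ _
  have hsq : ∀ P Q : Set E,
      (∀ r : ℝ, 0 < r → volume (P ∩ ball x r) ≤ volume (Q ∩ ball x r)) →
      Tendsto (fun r : ℝ => volume (P ∩ ball x r) / volume (ball x r))
        (nhdsWithin 0 (Set.Ioi 0)) (nhds 1) →
      Tendsto (fun r : ℝ => volume (Q ∩ ball x r) / volume (ball x r))
        (nhdsWithin 0 (Set.Ioi 0)) (nhds 1) := by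
    intro P Q hle hP
    apply tendsto_of_tendsto_of_tendsto_of_le_of_le' hP tendsto_const_nhds
    · filter_upwards [self_mem_nhdsWithin] with r hr
      exact ENNReal.div_le_div_right (hle r hr) _
    · filter_upwards [self_mem_nhdsWithin] with r hr
      exact ENNReal.div_le_of_le_mul (by rw [one_mul]; exact measure_mono Set.inter_subset_right)
  have key : ∀ ε : ℝ, 0 < ε → max (g x) m < a + ε := by
    intro ε hε
    have hxT : x ∈ {y : E | g y < a + ε} := by
      apply mem_of_density_one (hg (a + ε))
      apply hsq {y : E | |max (f y) m - max (f x) m| < ε} _ ?_ (hA ε hε)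
      intro r hr
      have hAT : volume ({y : E | |max (f y) m - max (f x) m| < ε} \ {y : E | g y < a + ε}) = 0 := by
        refine sub_null hfg fun y hy => ?_
        obtain ⟨hy1, hy2⟩ := hy
        simp only [Set.mem_setOf_eq] at hy1 hy2
        have hfy : f y < a + ε := by
          have h2 := (abs_lt.1 hy1).2
          have h3 : max (f y) m < a + ε := by rw [← ha] at h2; linarith
          exact lt_of_le_of_lt (le_max_left _ _) h3
        intro h; rw [h] at hfy; exact hy2 hfy
      calc volume ({y : E | |max (f y) m - max (f x) m| < ε} ∩ ball x r)
          ≤ volume (({y : E | g y < a + ε} ∩ ball x r) ∪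
              ({y : E | |max (f y) m - max (f x) m| < ε} \ {y : E | g y < a + ε})) := by
            refine measure_mono fun y hy => ?_
            by_cases h : y ∈ {y : E | g y < a + ε}
            exacts [Or.inl ⟨h, hy.2⟩, Or.inr ⟨hy.1, h⟩]
        _ ≤ volume ({y : E | g y < a + ε} ∩ ball x r) + _ := measure_union_le _ _
        _ = volume ({y : E | g y < a + ε} ∩ ball x r) := by rw [hAT, add_zero]
    exact max_lt hxT (by linarith)
  have hGle : max (g x) m ≤ a := by
    by_contra hlt
    push_neg at hlt
    have := key (max (g x) m - a) (by linarith)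
    linarith
  have hGge : a ≤ max (g x) m := by
    by_contra hlt
    push_neg at hlt
    set b := max (g x) m with hb
    set α := (b + a)/2 with hα
    have hm_le_b : m ≤ b := le_max_right _ _
    have hbα : b < α := by rw [hα]; linarith
    have hαa : α < a := by rw [hα]; linarith
    have hmα : m < α := lt_of_le_of_lt hm_le_b hbα
    set ε := a - α with hεdef
    have hε0 : 0 < ε := by rw [hεdef]; linarith
    have hxT : x ∈ {y : E | g y < α} := lt_of_le_of_lt (le_max_left _ _) hbα
    have hμT : volume {y : E | g y < α} ≠ 0 := Tpos hfg hm hmα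
    obtain ⟨c, hc0, hcev⟩ := exists_density_lb (hg α) hμT hxT
    have hAT : volume ({y : E | |max (f y) m - max (f x) m| < ε} ∩ {y : E | g y < α}) = 0 := by
      refine sub_null hfg fun y hy => ?_
      obtain ⟨hy1, hy2⟩ := hy
      simp only [Set.mem_setOf_eq] at hy1 hy2
      have h2 : α < max (f y) m := by
        have h3 := (abs_lt.1 hy1).1
        rw [← ha] at h3
        linarith
      have h3 : α < f y := by
        rcases max_cases (f y) m with ⟨h4, _⟩ | ⟨h4, _⟩
        · rwa [h4] at h2
        · rw [h4] at h2; linarith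
      intro h; rw [h] at h3; linarith
    have hkey : ∀ r : ℝ, 0 < r →
        volume ({y : E | |max (f y) m - max (f x) m| < ε} ∩ ball x r) / volume (ball x r)
          + volume ({y : E | g y < α} ∩ ball x r) / volume (ball x r) ≤ 1 := by
      intro r hr
      have h1 : volume ({y : E | |max (f y) m - max (f x) m| < ε} ∩ ball x r)
          ≤ volume (ball x r \ {y : E | g y < α}) := by
        calc volume ({y : E | |max (f y) m - max (f x) m| < ε} ∩ ball x r)
            ≤ volume (({y : E | |max (f y) m - max (f x) m| < ε} ∩ {y : E | g y < α}) ∪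
                (ball x r \ {y : E | g y < α})) := by
              refine measure_mono fun y hy => ?_
              by_cases h : y ∈ {y : E | g y < α}
              exacts [Or.inl ⟨hy.1, h⟩, Or.inr ⟨hy.2, h⟩]
          _ ≤ _ + volume (ball x r \ {y : E | g y < α}) := measure_union_le _ _
          _ = volume (ball x r \ {y : E | g y < α}) := by rw [hAT, zero_add]
      have h2 : volume (ball x r ∩ {y : E | g y < α}) + volume (ball x r \ {y : E | g y < α})
          = volume (ball x r) := measure_inter_add_diff₀ _ ((hg α).nullMeasurableSet volume)
      have h3 : volume ({y : E | |max (f y) m - max (f x) m| < ε} ∩ ball x r)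
          + volume ({y : E | g y < α} ∩ ball x r) ≤ volume (ball x r) := by
        rw [Set.inter_comm {y : E | g y < α}]
        calc volume ({y : E | |max (f y) m - max (f x) m| < ε} ∩ ball x r)
            + volume (ball x r ∩ {y : E | g y < α})
            ≤ volume (ball x r \ {y : E | g y < α})
              + volume (ball x r ∩ {y : E | g y < α}) := add_le_add_left h1 _
          _ = volume (ball x r) := by rw [add_comm, h2]
      rw [ENNReal.div_add_div_same]
      exact ENNReal.div_le_of_le_mul (by rw [one_mul]; exact h3)
    have hevA := (hA ε hε0).eventually
      (lt_mem_nhds (ENNReal.sub_lt_self ENNReal.one_ne_top one_ne_zero hc0))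
    obtain ⟨r, h1, h2, hr⟩ := (hevA.and (hcev.and self_mem_nhdsWithin)).exists
    have h4 := hkey r hr
    have h5 : volume ({y : E | |max (f y) m - max (f x) m| < ε} ∩ ball x r) / volume (ball x r)
        ≤ 1 - c :=
      ENNReal.le_sub_of_add_le_right (ne_top_of_le_ne_top ENNReal.one_ne_top
        (le_trans (le_add_self.trans (add_le_add_right h2 _)) h4))
        (le_trans (add_le_add_right h2 _) h4)
    exact absurd h5 (not_le.2 h1)
  have hval : max (g x) m = a := le_antisymm hGle hGge
  refine ⟨?_, hval⟩
  intro ε hε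
  apply hsq {y : E | |max (f y) m - max (f x) m| < ε} _ ?_ (hA ε hε)
  intro r hr
  have hsub : {y : E | |max (f y) m - max (f x) m| < ε} ∩ ball x r ⊆
      ({y : E | |max (g y) m - max (g x) m| < ε} ∩ ball x r) ∪ {y : E | ¬ f y = g y} := by
    rintro y ⟨hy1, hy2⟩
    by_cases h : f y = g y
    · left
      refine ⟨?_, hy2⟩
      simp only [Set.mem_setOf_eq] at hy1 ⊢
      rw [← h, hval]
      exact hy1
    · right; exact h
  calc volume ({y : E | |max (f y) m - max (f x) m| < ε} ∩ ball x r)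
      ≤ volume (({y : E | |max (g y) m - max (g x) m| < ε} ∩ ball x r) ∪ {y : E | ¬ f y = g y}) :=
        measure_mono hsub
    _ ≤ volume ({y : E | |max (g y) m - max (g x) m| < ε} ∩ ball x r)
        + volume {y : E | ¬ f y = g y} := measure_union_le _ _
    _ = volume ({y : E | |max (g y) m - max (g x) m| < ε} ∩ ball x r) := by
        rw [diff_null hfg, add_zero]

end Transfer

end Stmt10Aux


theorem stmt_10 {N : ℕ} (f g : EuclideanSpace ℝ (Fin N) → ℝ) (m : ℝ)
    (hf : ∀ α : ℝ, Convex ℝ {x | f x < α}) (hg : ∀ α : ℝ, Convex ℝ {x | g x < α})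
    (hfg : f =ᵐ[volume] g)
    (hm : essInf (fun x => (f x : EReal)) volume = (m : EReal)) :
    ∀ x : EuclideanSpace ℝ (Fin N),
      (ContinuousAt (fun y => max (f y) m) x ↔ ContinuousAt (fun y => max (g y) m) x) ∧
      (ApproxContinuousAt (fun y => max (f y) m) x ↔
        ApproxContinuousAt (fun y => max (g y) m) x) ∧
      (ContinuousAt (fun y => max (f y) m) x → ContinuousAt (fun y => max (g y) m) x →
        max (f x) m = max (g x) m) ∧
      (ApproxContinuousAt (fun y => max (f y) m) x → ApproxContinuousAt (fun y => max (g y) m) x →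
        max (f x) m = max (g x) m) := by
  intro x
  have hm' : essInf (fun x => (g x : EReal)) volume = (m : EReal) := by
    rw [← hm]
    exact (essInf_congr_ae (hfg.mono fun y hy => by rw [hy])).symm
  exact ⟨⟨fun h => (Stmt10Aux.cont_transfer hg hfg hm x h).1,
          fun h => (Stmt10Aux.cont_transfer hf hfg.symm hm' x h).1⟩,
         ⟨fun h => (Stmt10Aux.approx_transfer hg hfg hm x h).1,
          fun h => (Stmt10Aux.approx_transfer hf hfg.symm hm' x h).1⟩,
         fun h _ => (Stmt10Aux.cont_transfer hg hfg hm x h).2.symm,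
         fun h _ => (Stmt10Aux.approx_transfer hg hfg hm x h).2.symm⟩
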